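/- Let A and B be n×n matrices over ℝ≥0∞ and let the closure of a square matrix M over ℝ≥0∞ be M* := ∑' k, M^k. Then (A + B)* = (A*·B)*·A*. -/

import Mathlib

open scoped ENNReal

/-- The closure of a square matrix over `ℝ≥0∞`. -/
noncomputable def matrixClosure {p : Type*} [Fintype p] [DecidableEq p]
    (M : Matrix p p ℝ≥0∞) : Matrix p p ℝ≥0∞ :=
  ∑' k : ℕ, M ^ k

section Helpers

variable {p : Type*} [Fintype p] {X : Type*}

theorem mat_summable (f : X → Matrix p p ℝ≥0∞) : Summable f := by
  apply Pi.summable.2; intro i; apply Pi.summable.2; intro j; exact ENNReal.summable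

theorem mat_tsum_apply (f : X → Matrix p p ℝ≥0∞) (i j : p) :
    (∑' x, f x) i j = ∑' x, f x i j := by
  erw [tsum_apply (mat_summable f), tsum_apply]
  apply Pi.summable.2; intro j; exact ENNReal.summable

theorem mat_tsum_mul_right (f : X → Matrix p p ℝ≥0∞) (C : Matrix p p ℝ≥0∞) :
    (∑' x, f x) * C = ∑' x, f x * C := by
  ext i j
  have h : ∀ k, (∑' x, f x i k) * C k j = ∑' x, f x i k * C k j := fun k =>
    ENNReal.tsum_mul_right.symm
  rw [Matrix.mul_apply]
  simp only [mat_tsum_apply, Matrix.mul_apply, h]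
  exact (Summable.tsum_finsetSum fun _ _ => ENNReal.summable).symm

theorem mat_tsum_mul_left (f : X → Matrix p p ℝ≥0∞) (C : Matrix p p ℝ≥0∞) :
    C * (∑' x, f x) = ∑' x, C * f x := by
  ext i j
  have h : ∀ k, C i k * (∑' x, f x k j) = ∑' x, C i k * f x k j := fun k =>
    ENNReal.tsum_mul_left.symm
  rw [Matrix.mul_apply]
  simp only [mat_tsum_apply, Matrix.mul_apply, h]
  exact (Summable.tsum_finsetSum fun _ _ => ENNReal.summable).symm

theorem mat_tsum_prod {Y : Type*} (f : X × Y → Matrix p p ℝ≥0∞) :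
    ∑' x : X × Y, f x = ∑' a, ∑' b, f (a, b) := by
  ext i j
  simp only [mat_tsum_apply]
  exact ENNReal.tsum_prod'

theorem mat_tsum_sigma {β : X → Type*} (f : (Σ a, β a) → Matrix p p ℝ≥0∞) :
    ∑' x : Σ a, β a, f x = ∑' a, ∑' b, f ⟨a, b⟩ := by
  ext i j
  simp only [mat_tsum_apply]
  exact ENNReal.tsum_sigma' _

/-- A power of a `tsum` expands as a `tsum` over tuples. -/
theorem mat_tsum_pow [DecidableEq p] (f : X → Matrix p p ℝ≥0∞) (k : ℕ) :
    (∑' x, f x) ^ k = ∑' t : Fin k → X, (List.ofFn fun j => f (t j)).prod := by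
  induction k with
  | zero =>
      simp only [pow_zero, List.ofFn_zero, List.prod_nil]
      have h0 : ∑' _t : Fin 0 → X, (1 : Matrix p p ℝ≥0∞) = 1 :=
        tsum_eq_single Fin.elim0 fun b hb => absurd (funext fun i => i.elim0) hb
      exact h0.symm
  | succ k ih =>
      rw [pow_succ', ih, ← (Fin.consEquiv (fun _ : Fin (k+1) => X)).tsum_eq, mat_tsum_prod,
        mat_tsum_mul_right]
      refine tsum_congr fun a => ?_
      rw [mat_tsum_mul_left]
      refine tsum_congr fun t => ?_
      simp [Fin.consEquiv, List.ofFn_succ, Fin.cons]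

/-- The closure of a `tsum` expands as a `tsum` over words. -/
theorem mat_closure_tsum [DecidableEq p] (f : X → Matrix p p ℝ≥0∞) :
    matrixClosure (∑' x, f x) = ∑' l : List X, (l.map f).prod := by
  rw [matrixClosure]
  calc ∑' k : ℕ, (∑' x, f x) ^ k
      = ∑' k : ℕ, ∑' t : Fin k → X, (List.ofFn fun j => f (t j)).prod :=
        tsum_congr (mat_tsum_pow f)
    _ = ∑' σ : Σ k : ℕ, Fin k → X, (List.ofFn fun j => f (σ.2 j)).prod :=
        (mat_tsum_sigma
          (fun σ : Σ k : ℕ, Fin k → X => (List.ofFn fun j => f (σ.2 j)).prod)).symm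
    _ = ∑' l : List X, (l.map f).prod := by
        rw [← List.equivSigmaTuple.tsum_eq
          (fun σ : Σ k : ℕ, Fin k → X => (List.ofFn fun j => f (σ.2 j)).prod)]
        refine tsum_congr fun l => ?_
        simp only [List.equivSigmaTuple, Equiv.coe_fn_mk]
        rw [show (fun j => f (l.get j)) = f ∘ l.get from rfl, ← List.map_ofFn,
          List.ofFn_get]

end Helpers

section Words

variable {n : ℕ} (A B : Matrix (Fin n) (Fin n) ℝ≥0∞)

/-- Encode a list of gaps plus a final gap as a word. -/
def wordOf (x : List ℕ × ℕ) : List Bool :=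
  (x.1.flatMap fun i => List.replicate i false ++ [true]) ++ List.replicate x.2 false

theorem wordOf_cons (i : ℕ) (l : List ℕ) (g : ℕ) :
    wordOf (i :: l, g) = List.replicate i false ++ (true :: wordOf (l, g)) := by
  simp [wordOf, List.flatMap_cons, List.append_assoc]

/-- Decode a word into gaps before each `true` and the final gap. -/
def gapsOf : List Bool → List ℕ × ℕ
  | [] => ([], 0)
  | true :: w => (0 :: (gapsOf w).1, (gapsOf w).2)
  | false :: w =>
      match gapsOf w with
      | ([], g) => ([], g + 1)
      | (i :: l, g) => ((i + 1) :: l, g)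

theorem wordOf_gapsOf : ∀ w : List Bool, wordOf (gapsOf w) = w
  | [] => rfl
  | true :: w => by
      have ih := wordOf_gapsOf w
      show wordOf (0 :: (gapsOf w).1, (gapsOf w).2) = true :: w
      rw [wordOf_cons]
      simp only [List.replicate_zero, List.nil_append]
      rw [show ((gapsOf w).1, (gapsOf w).2) = gapsOf w from rfl, ih]
  | false :: w => by
      have ih := wordOf_gapsOf w
      rcases h : gapsOf w with ⟨l, g⟩
      rw [h] at ih
      cases l with
      | nil =>
          show wordOf (gapsOf (false :: w)) = false :: w
          rw [gapsOf, h]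
          simp only [wordOf, List.flatMap_nil, List.nil_append] at ih ⊢
          rw [List.replicate_succ, ih]
      | cons i l =>
          show wordOf (gapsOf (false :: w)) = false :: w
          rw [gapsOf, h]
          rw [wordOf_cons] at ih ⊢
          rw [List.replicate_succ, List.cons_append, ih]

theorem gapsOf_replicate (g : ℕ) : gapsOf (List.replicate g false) = ([], g) := by
  induction g with
  | zero => rfl
  | succ g ih => rw [List.replicate_succ, gapsOf, ih]

theorem gapsOf_block (i : ℕ) (w : List Bool) :
    gapsOf (List.replicate i false ++ (true :: w)) = (i :: (gapsOf w).1, (gapsOf w).2) := by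
  induction i with
  | zero => simp [gapsOf]
  | succ i ih => rw [List.replicate_succ, List.cons_append, gapsOf, ih]

theorem gapsOf_wordOf (x : List ℕ × ℕ) : gapsOf (wordOf x) = x := by
  rcases x with ⟨l, g⟩
  induction l with
  | nil => simpa [wordOf] using gapsOf_replicate g
  | cons i l ih => rw [wordOf_cons, gapsOf_block, ih]

/-- The equivalence between pairs (gaps, final gap) and words. -/
def wordEquiv : List ℕ × ℕ ≃ List Bool where
  toFun := wordOf
  invFun := gapsOf
  left_inv := gapsOf_wordOf
  right_inv := wordOf_gapsOf

theorem prod_wordOf (x : List ℕ × ℕ) :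
    ((wordOf x).map fun b => if b then B else A).prod =
      (x.1.map fun i => A ^ i * B).prod * A ^ x.2 := by
  rcases x with ⟨l, g⟩
  have hrep : ∀ m : ℕ,
      ((List.replicate m false).map fun b : Bool => if b then B else A).prod = A ^ m := by
    intro m
    simp [List.map_replicate, List.prod_replicate]
  induction l with
  | nil => simpa [wordOf] using hrep g
  | cons i l ih =>
      rw [wordOf_cons, List.map_append, List.prod_append, hrep i, List.map_cons,
        List.prod_cons, if_pos rfl, ih]
      simp [mul_assoc]

end Words

/-- For `n × n` matrices `A`, `B` over `ℝ≥0∞`, `(A + B)* = (A* B)* A*`. -/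
theorem closure_add (n : ℕ) (A B : Matrix (Fin n) (Fin n) ℝ≥0∞) :
    matrixClosure (A + B) =
      matrixClosure (matrixClosure A * B) * matrixClosure A := by
  have hAB : A + B = ∑' b : Bool, (if b then B else A) := by
    rw [tsum_fintype]
    simp [add_comm]
  have hA : matrixClosure A * B = ∑' i : ℕ, A ^ i * B := by
    rw [matrixClosure, mat_tsum_mul_right]
  calc matrixClosure (A + B)
      = ∑' w : List Bool, (w.map fun b => if b then B else A).prod := by
        rw [hAB, mat_closure_tsum]
    _ = ∑' x : List ℕ × ℕ, ((wordOf x).map fun b => if b then B else A).prod :=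
        (wordEquiv.tsum_eq _).symm
    _ = ∑' x : List ℕ × ℕ, (x.1.map fun i => A ^ i * B).prod * A ^ x.2 := by
        simp only [prod_wordOf]
    _ = ∑' l : List ℕ, ∑' g : ℕ, (l.map fun i => A ^ i * B).prod * A ^ g := by
        rw [mat_tsum_prod]
    _ = matrixClosure (matrixClosure A * B) * matrixClosure A := by
        rw [hA, mat_closure_tsum, mat_tsum_mul_right]
        refine tsum_congr fun l => ?_
        rw [matrixClosure, mat_tsum_mul_left]
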